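/- Let φ : [0, r] → ℝ³ be a C² unit-speed curve with φ(0) = p₀ = (0,0,0), φ'(0) = (1,0,0), curvature bound |φ''(s)| ≤ b, and r ≤ 1/(4b). Let x = (0,0,-d) with 0 ≤ d ≤ r. Then for every s ∈ [0, r], |x - p₀|² + (1/2)s² ≤ |φ(s) - x|². -/

import Mathlib

set_option maxHeartbeats 1000000 in
/-- a `C²` unit-speed curve `φ : [0,r] → ℝ³` with `φ(0) = 0`,
`φ'(0) = (1,0,0)`, `|φ''| ≤ b` and `r ≤ 1/(4b)`; for `x = (0,0,-d)` with
`0 ≤ d ≤ r` and every `s ∈ [0,r]`: `|x - φ(0)|² + (1/2)s² ≤ |φ(s) - x|²`. -/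
theorem curve_distance_lower_bound
    (b r d : ℝ) (hb : 0 < b) (hr : r ≤ 1 / (4 * b)) (hd0 : 0 ≤ d) (hdr : d ≤ r)
    (φ φ' φ'' : ℝ → EuclideanSpace ℝ (Fin 3))
    (hder1 : ∀ s ∈ Set.Icc 0 r, HasDerivWithinAt φ (φ' s) (Set.Icc 0 r) s)
    (hder2 : ∀ s ∈ Set.Icc 0 r, HasDerivWithinAt φ' (φ'' s) (Set.Icc 0 r) s)
    (hcont2 : ContinuousOn φ'' (Set.Icc 0 r))
    (hunit : ∀ s ∈ Set.Icc 0 r, ‖φ' s‖ = 1)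
    (hφ0 : φ 0 = 0) (hφ'0 : φ' 0 = EuclideanSpace.single (0 : Fin 3) (1 : ℝ))
    (hbnd : ∀ s ∈ Set.Icc 0 r, ‖φ'' s‖ ≤ b)
    (x : EuclideanSpace ℝ (Fin 3)) (hx : x = EuclideanSpace.single (2 : Fin 3) (-d))
    (s : ℝ) (hs : s ∈ Set.Icc 0 r) :
    ‖x - φ 0‖ ^ 2 + 1 / 2 * s ^ 2 ≤ ‖φ s - x‖ ^ 2 := by
  obtain ⟨hs0, hsr⟩ := hs
  have hr0 : (0:ℝ) ≤ r := le_trans hs0 hsr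
  have hbr : b * r ≤ 1 / 4 := by
    have h1 : b * r ≤ b * (1 / (4 * b)) := mul_le_mul_of_nonneg_left hr hb.le
    have h2 : b * (1 / (4 * b)) = 1 / 4 := by field_simp
    linarith
  have hbs : b * s ≤ 1 / 4 := le_trans (mul_le_mul_of_nonneg_left hsr hb.le) hbr
  have hdb : d * b ≤ 1 / 4 := by
    have := mul_le_mul_of_nonneg_left hdr hb.le
    nlinarith
  -- Step A: ‖φ' t - φ' 0‖ ≤ b * t on [0, r]
  have hA : ∀ t ∈ Set.Icc (0:ℝ) r, ‖φ' t - φ' 0‖ ≤ b * t := by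
    intro t ht
    have h := (convex_Icc (0:ℝ) r).norm_image_sub_le_of_norm_hasDerivWithin_le hder2 hbnd
      (Set.left_mem_Icc.2 hr0) ht
    simpa [Real.norm_eq_abs, abs_of_nonneg ht.1] using h
  -- Step B: Taylor remainder bound
  have hsub : Set.Icc (0:ℝ) s ⊆ Set.Icc 0 r := Set.Icc_subset_Icc le_rfl hsr
  set f : ℝ → EuclideanSpace ℝ (Fin 3) := fun t => φ t - φ 0 - t • φ' 0 with hf_def
  have hf_cont : ContinuousOn f (Set.Icc 0 s) := by
    have hφc : ContinuousOn φ (Set.Icc 0 s) := fun t ht =>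
      ((hder1 t (hsub ht)).continuousWithinAt).mono hsub
    exact (hφc.sub continuousOn_const).sub (continuousOn_id.smul continuousOn_const)
  have hfd : ∀ t ∈ Set.Ico (0:ℝ) s, HasDerivWithinAt f (φ' t - φ' 0) (Set.Ici t) t := by
    intro t ht
    have htr : t ∈ Set.Icc (0:ℝ) r := ⟨ht.1, le_trans ht.2.le hsr⟩
    have hmem : Set.Icc (0:ℝ) r ∈ nhdsWithin t (Set.Ici t) := by
      refine Filter.mem_of_superset (Icc_mem_nhdsGE_of_mem ⟨le_rfl, lt_of_lt_of_le ht.2 hsr⟩) ?_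
      exact Set.Icc_subset_Icc ht.1 le_rfl
    have h1 : HasDerivWithinAt φ (φ' t) (Set.Ici t) t := (hder1 t htr).mono_of_mem_nhdsWithin hmem
    have h2 : HasDerivWithinAt (fun u : ℝ => u • φ' 0) (φ' 0) (Set.Ici t) t := by
      simpa using ((hasDerivAt_id t).smul_const (φ' 0)).hasDerivWithinAt
    exact (h1.sub_const (φ 0)).sub h2
  have hB : ∀ t : ℝ, HasDerivAt (fun u => b / 2 * u ^ 2) (b * t) t := by
    intro t
    have := (hasDerivAt_pow 2 t).const_mul (b / 2)
    refine this.congr_deriv ?_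
    ring
  have hbound : ∀ t ∈ Set.Ico (0:ℝ) s, ‖φ' t - φ' 0‖ ≤ b * t := fun t ht =>
    hA t ⟨ht.1, le_trans ht.2.le hsr⟩
  have ha : ‖f 0‖ ≤ b / 2 * (0:ℝ) ^ 2 := by simp [hf_def]
  have hkey := image_norm_le_of_norm_deriv_right_le_deriv_boundary hf_cont hfd ha hB hbound
    (Set.right_mem_Icc.2 hs0)
  have hR : ‖φ s - s • φ' 0‖ ≤ b / 2 * s ^ 2 := by
    simpa [hf_def, hφ0] using hkey
  -- norm lower bound
  have hsnorm : ‖s • φ' 0‖ = s := by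
    rw [norm_smul, hunit 0 ⟨le_rfl, hr0⟩, Real.norm_eq_abs, abs_of_nonneg hs0, mul_one]
  have hlow : s - b / 2 * s ^ 2 ≤ ‖φ s‖ := by
    have h := norm_sub_norm_le (s • φ' 0) (φ s)
    rw [norm_sub_rev] at h
    linarith [hsnorm ▸ h, hR]
  -- component bound
  have habs : ∀ v : EuclideanSpace ℝ (Fin 3), |v 2| ≤ ‖v‖ := by
    intro v
    have h := abs_real_inner_le_norm v (EuclideanSpace.single 2 (1:ℝ))
    simpa [EuclideanSpace.inner_single_right] using h
  have hcomp : |φ s 2| ≤ b / 2 * s ^ 2 := by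
    have h2 : (φ s - s • φ' 0) 2 = φ s 2 := by
      have : φ' 0 2 = 0 := by rw [hφ'0]; simp [EuclideanSpace.single_apply]
      simp [PiLp.sub_apply, PiLp.smul_apply, this]
    have := (habs (φ s - s • φ' 0)).trans hR
    rwa [h2] at this
  -- expand the norms
  have hxnorm : ‖x‖ = d := by
    rw [hx, EuclideanSpace.norm_single, Real.norm_eq_abs, abs_neg, abs_of_nonneg hd0]
  have hinner : inner ℝ (φ s) x = -d * φ s 2 := by
    rw [hx]
    simpa using EuclideanSpace.inner_single_right (𝕜 := ℝ) 2 (-d) (φ s)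
  have hexp : ‖φ s - x‖ ^ 2 = ‖φ s‖ ^ 2 - 2 * (-d * φ s 2) + d ^ 2 := by
    rw [norm_sub_sq_real, hinner, hxnorm]
  rw [hφ0, sub_zero, hxnorm, hexp]
  obtain ⟨hc1, hc2⟩ := abs_le.mp hcomp
  have hk0 : 0 ≤ s - b / 2 * s ^ 2 := by nlinarith
  have hA2 : (s - b / 2 * s ^ 2) ^ 2 ≤ ‖φ s‖ ^ 2 := by
    exact pow_le_pow_left₀ hk0 hlow 2
  nlinarith [mul_le_mul_of_nonneg_left hc1 hd0, mul_le_mul_of_nonneg_right hbs (sq_nonneg s),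
    mul_le_mul_of_nonneg_right hdb (sq_nonneg s), sq_nonneg s, mul_nonneg hs0 hs0]
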